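/- The kernel of the ℂ-linear operator E1 = ∂x + (1/2)ξ3∂2 on R = ℂ[x,ξ2,ξ3] equals (as a ℂ-subspace of R) the ℂ-subalgebra of R generated by the two polynomials ξ3 and x·ξ3 − 2ξ2. In other words, the space of singular vectors of the s1-twisted Verma module M^{s1}(λ) for the subalgebra sl(2,ℂ) embedded on the first simple root of sl(3,ℂ) is ℂ[ξ3, x·ξ3 − 2ξ2]. -/

import Mathlib

open MvPolynomial

noncomputable section

/-- The polynomial algebra `R = ℂ[x,ξ2,ξ3]`
(variable `x` has index `0`, `ξ2` index `1`, `ξ3` index `2`). -/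
abbrev R3 : Type := MvPolynomial (Fin 3) ℂ

/-- Multiplication by the `i`-th variable as a `ℂ`-linear endomorphism of `R`. -/
def ξ (i : Fin 3) : Module.End ℂ R3 := LinearMap.mulLeft ℂ (X i)

/-- The partial derivative with respect to the `i`-th variable as a `ℂ`-linear endomorphism
of `R` (`D 0 = ∂x`, `D 1 = ∂2`, `D 2 = ∂3`). -/
def D (i : Fin 3) : Module.End ℂ R3 := (pderiv i).toLinearMap

/-- `E1 = ∂x + (1/2)ξ3∂2`, the image of the Chevalley generator `e1` in the
partial-Fourier-transformed realization of the `s1`-twisted Verma module. -/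
def E1 : Module.End ℂ R3 := D 0 + (1/2 : ℂ) • (ξ 2 * D 1)

/-- `E1` as a derivation. -/
def E1d : Derivation ℂ R3 R3 := pderiv 0 + ((1/2 : ℂ) • X 2 : R3) • pderiv 1

lemma E1_apply (p : R3) : E1 p = E1d p := by
  simp [E1, E1d, D, ξ, Module.End.mul_apply, LinearMap.mulLeft_apply, smul_mul_assoc,
    Derivation.coe_add, Derivation.coe_smul]

/-- The substitution `x ↦ x`, `ξ2 ↦ xξ3 − 2ξ2`, `ξ3 ↦ ξ3`. -/
def φ : R3 →ₐ[ℂ] R3 := aeval ![X 0, X 0 * X 2 - C 2 * X 1, X 2]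

/-- The inverse substitution. -/
def ψ : R3 →ₐ[ℂ] R3 := aeval ![X 0, C (1/2 : ℂ) * (X 0 * X 2 - X 1), X 2]

lemma φψ (p : R3) : φ (ψ p) = p := by
  have h : φ.comp ψ = AlgHom.id ℂ R3 := by
    apply MvPolynomial.algHom_ext
    intro i
    fin_cases i <;> (simp [φ, ψ, smul_eq_C_mul, mul_comm, mul_left_comm, mul_assoc, ← C_mul]; try norm_num)
  calc φ (ψ p) = (φ.comp ψ) p := rfl
    _ = p := by rw [h]; rfl

lemma ψφ (p : R3) : ψ (φ p) = p := by
  have h : ψ.comp φ = AlgHom.id ℂ R3 := by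
    apply MvPolynomial.algHom_ext
    intro i
    fin_cases i <;> (simp [φ, ψ, smul_eq_C_mul, mul_comm, mul_left_comm, mul_assoc, ← C_mul]; try norm_num)
  calc ψ (φ p) = (ψ.comp φ) p := rfl
    _ = p := by rw [h]; rfl

lemma E1d_φ_X (i : Fin 3) : E1d (φ (X i)) = φ (pderiv 0 (X i)) := by
  fin_cases i <;> (simp [E1d, φ, Derivation.coe_add, Derivation.coe_smul, pderiv_X, Pi.single_apply, smul_mul_assoc, smul_eq_C_mul, mul_comm, mul_left_comm, mul_assoc, ← C_mul]; try norm_num)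

lemma E1d_φ (p : R3) : E1d (φ p) = φ (pderiv 0 p) := by
  induction p using MvPolynomial.induction_on with
  | C a => simp [φ, Derivation.map_algebraMap, ← MvPolynomial.algebraMap_eq]
  | add p q hp hq => simp [map_add, hp, hq]
  | mul_X p i hp =>
    rw [map_mul, Derivation.leibniz, pderiv_mul, map_add, map_mul, map_mul]
    rw [smul_eq_mul, smul_eq_mul, hp, E1d_φ_X]
    ring

lemma coeff_pderiv0 (d : Fin 3 →₀ ℕ) (hdne : d 0 ≠ 0) (p : R3) :
    coeff (d - Finsupp.single 0 1) (pderiv 0 p) = (d 0 : ℂ) * coeff d p := by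
  induction p using MvPolynomial.induction_on' with
  | monomial s a =>
    rw [pderiv_monomial, coeff_monomial, coeff_monomial]
    by_cases hs : s = d
    · subst hs
      simp [mul_comm]
    · rw [if_neg hs]
      by_cases hs0 : s 0 = 0
      · simp [hs0]
      · rw [if_neg]
        · simp
        · intro hcontra
          apply hs
          ext j
          have := DFunLike.congr_fun hcontra j
          simp only [Finsupp.tsub_apply, Finsupp.single_apply] at this
          by_cases hj : j = 0
          · subst hj
            simp at this
            omega
          · simpa [Ne.symm hj] using this
  | add f g hf hg =>
    simp only [map_add, coeff_add, hf, hg]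
    ring

lemma ker_pderiv0 :
    LinearMap.ker ((pderiv 0 : Derivation ℂ R3 R3).toLinearMap) =
      Subalgebra.toSubmodule (Algebra.adjoin ℂ ({X 1, X 2} : Set R3)) := by
  ext p
  simp only [LinearMap.mem_ker, Derivation.coeFn_coe, Subalgebra.mem_toSubmodule]
  have himg : (X '' ({1, 2} : Set (Fin 3)) : Set R3) = {X 1, X 2} := by
    rw [Set.image_pair]
  rw [← himg, ← MvPolynomial.supported_eq_adjoin_X]
  constructor
  · intro hp
    rw [MvPolynomial.mem_supported]
    intro i hi
    have hi' : i ∈ p.vars := hi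
    by_cases h0 : i = 0
    · exfalso
      subst h0
      rw [MvPolynomial.mem_vars] at hi'
      obtain ⟨d, hd, hd0⟩ := hi'
      have hdne : d 0 ≠ 0 := Finsupp.mem_support_iff.mp hd0
      have key := coeff_pderiv0 d hdne p
      rw [hp] at key
      simp only [coeff_zero] at key
      exact (mul_ne_zero (Nat.cast_ne_zero.mpr hdne)
        (MvPolynomial.mem_support_iff.mp hd)) key.symm
    · fin_cases i
      · exact absurd rfl h0
      · exact Set.mem_insert _ _
      · exact Set.mem_insert_of_mem _ rfl
  · intro hp
    apply MvPolynomial.pderiv_eq_zero_of_notMem_vars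
    rw [MvPolynomial.mem_supported] at hp
    intro h0
    have := hp h0
    simp at this

lemma φ_inj : Function.Injective φ := fun a b h => by rw [← ψφ a, ← ψφ b, h]

lemma set_eq : ({X 2, X 0 * X 2 - 2 * X 1} : Set R3) = φ '' {X 1, X 2} := by
  rw [Set.image_pair]
  have h1 : φ (X 1) = X 0 * X 2 - 2 * X 1 := by
    simp [φ]
    rw [map_ofNat]
  have h2 : φ (X 2) = X 2 := by simp [φ]
  rw [h1, h2, Set.pair_comm]

/-- The space of `sl(2,ℂ)`-singular vectors of the `s1`-twisted Verma module `M^{s1}(λ)`,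
i.e. the kernel of `E1 = ∂x + (1/2)ξ3∂2` on `ℂ[x,ξ2,ξ3]`, is the `ℂ`-subalgebra
`ℂ[ξ3, x·ξ3 − 2ξ2]` generated by `ξ3` and `x·ξ3 − 2ξ2`. -/
theorem ker_E1_eq_adjoin :
    LinearMap.ker E1 =
      Subalgebra.toSubmodule
        (Algebra.adjoin ℂ ({X 2, X 0 * X 2 - 2 * X 1} : Set R3)) := by
  ext p
  simp only [LinearMap.mem_ker, Subalgebra.mem_toSubmodule]
  rw [set_eq, ← AlgHom.map_adjoin]
  constructor
  · intro hp
    have h2 : φ (pderiv 0 (ψ p)) = 0 := by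
      rw [← E1d_φ, φψ, ← E1_apply, hp]
    have h3 : pderiv 0 (ψ p) = 0 := φ_inj (by simpa using h2)
    have h4 : ψ p ∈ Algebra.adjoin ℂ ({X 1, X 2} : Set R3) := by
      have := ker_pderiv0
      have hm : ψ p ∈ LinearMap.ker ((pderiv 0 : Derivation ℂ R3 R3).toLinearMap) := by
        simpa using h3
      rw [ker_pderiv0] at hm
      simpa using hm
    exact ⟨ψ p, h4, φψ p⟩
  · intro hp
    rw [Subalgebra.mem_map] at hp
    obtain ⟨q, hq, rfl⟩ := hp
    have hq0 : pderiv 0 q = 0 := by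
      have hm : q ∈ LinearMap.ker ((pderiv 0 : Derivation ℂ R3 R3).toLinearMap) := by
        rw [ker_pderiv0]; exact hq
      simpa using hm
    rw [E1_apply, E1d_φ, hq0, map_zero]
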